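/- Let G be a finite simple graph and X a subset of its vertex set. Suppose that (1) the induced subgraph G − X is (2,1)-decomposable; (2) M is a set of edges of G forming a matching, each edge of which has both endpoints in X; and (3) there is an acyclic orientation D of all edges of G that are incident with at least one vertex of X and do not belong to M, such that every edge with exactly one endpoint in X is oriented from X towards its endpoint outside X, and every vertex of X has out-degree at most 2 in D. Then G is (2,1)-decomposable. -/

import Mathlib

/-- A graph `G` is `d`-degenerate if every nonempty (induced) subgraph has a
vertex of degree at most `d`. -/
def SimpleGraph.DegenerateLE {V : Type*} (G : SimpleGraph V) (d : ℕ) : Prop :=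
  ∀ S : Set V, S.Nonempty → ∃ v ∈ S, (S ∩ G.neighborSet v).ncard ≤ d

/-- A graph `G` is `(d, h)`-decomposable if there is a subgraph `H` of `G` with
maximum degree at most `h` such that `G - E(H)` is `d`-degenerate. -/
def SimpleGraph.IsDecomposable {V : Type*} (G : SimpleGraph V) (d h : ℕ) : Prop :=
  ∃ H : SimpleGraph V, H ≤ G ∧ (∀ v, (H.neighborSet v).ncard ≤ h) ∧
    (G \ H).DegenerateLE d

lemma exists_source' {V : Type*} [Finite V] (D : V → V → Prop)
    (hac : ∀ v, ¬ Relation.TransGen D v v) (T : Set V) (hT : T.Nonempty) :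
    ∃ v ∈ T, ∀ w ∈ T, ¬ D w v := by
  obtain ⟨v, hvT, hmin⟩ := (Set.toFinite T).exists_minimalFor
    (fun v => {u ∈ T | Relation.TransGen D u v}.ncard) T hT
  refine ⟨v, hvT, fun w hwT hDwv => ?_⟩
  have hsub : {u ∈ T | Relation.TransGen D u w} ⊂ {u ∈ T | Relation.TransGen D u v} := by
    constructor
    · rintro u ⟨huT, hu⟩
      exact ⟨huT, hu.tail hDwv⟩
    · intro hsub'
      exact hac w (hsub' ⟨hwT, Relation.TransGen.single hDwv⟩).2
  have hlt := Set.ncard_lt_ncard hsub (Set.toFinite _)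
  have h2 : {u ∈ T | Relation.TransGen D u v}.ncard ≤ {u ∈ T | Relation.TransGen D u w}.ncard :=
    hmin hwT (le_of_lt hlt)
  omega

/-- If `G - X` is `(2,1)`-decomposable, `M` is a matching of `G` with all endpoints
in `X`, and there is an acyclic orientation `D` of the edges of `G` incident with `X`
and not in `M` such that edges leaving `X` are oriented away from `X` and every vertex
of `X` has out-degree at most `2`, then `G` is `(2,1)`-decomposable. -/
theorem statement0 {V : Type*} [Fintype V] (G : SimpleGraph V) (X : Set V)
    (M : SimpleGraph V) (hMG : M ≤ G)
    (hMmatch : ∀ v, (M.neighborSet v).ncard ≤ 1)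
    (hMX : ∀ u w, M.Adj u w → u ∈ X ∧ w ∈ X)
    (hGX : (G.induce (Xᶜ : Set V)).IsDecomposable 2 1)
    (D : V → V → Prop)
    (hDdom : ∀ u w, D u w → G.Adj u w ∧ ¬ M.Adj u w ∧ (u ∈ X ∨ w ∈ X))
    (hDtotal : ∀ u w, G.Adj u w → ¬ M.Adj u w → (u ∈ X ∨ w ∈ X) → D u w ∨ D w u)
    (hDasymm : ∀ u w, D u w → ¬ D w u)
    (hDacyclic : ∀ v, ¬ Relation.TransGen D v v)
    (hDout : ∀ u w, u ∈ X → w ∉ X → G.Adj u w → ¬ M.Adj u w → D u w)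
    (hDdeg : ∀ u ∈ X, {w | D u w}.ncard ≤ 2) :
    G.IsDecomposable 2 1 := by
  obtain ⟨H₀, hH₀le, hH₀deg, hH₀dgn⟩ := hGX
  set emb : ↥(Xᶜ : Set V) ↪ V := Function.Embedding.subtype _ with hemb
  set H : SimpleGraph V := M ⊔ H₀.map emb with hH
  have hmapAdj : ∀ u w, (H₀.map emb).Adj u w ↔
      ∃ a b : ↥(Xᶜ : Set V), H₀.Adj a b ∧ (a : V) = u ∧ (b : V) = w := by
    intro u w; rw [SimpleGraph.map_adj]; rfl
  have hHXadj : ∀ u w, u ∈ X → (H.Adj u w ↔ M.Adj u w) := by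
    intro u w hu
    constructor
    · intro h
      rcases h with h | h
      · exact h
      · rcases (hmapAdj u w).1 h with ⟨a, b, _, ha, _⟩
        exact absurd hu (ha ▸ a.2)
    · intro h; exact Or.inl h
  refine ⟨H, ?_, ?_, ?_⟩
  · refine sup_le hMG ?_
    intro u w h
    rcases (hmapAdj u w).1 h with ⟨a, b, hab, ha, hb⟩
    subst ha; subst hb
    exact hH₀le hab
  · intro v
    by_cases hv : v ∈ X
    · have : H.neighborSet v = M.neighborSet v := by
        ext w
        exact hHXadj v w hv
      rw [this]; exact hMmatch v
    · have hv' : v ∈ (Xᶜ : Set V) := hv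
      have : H.neighborSet v = (↑) '' (H₀.neighborSet ⟨v, hv'⟩) := by
        ext w
        simp only [SimpleGraph.mem_neighborSet, Set.mem_image]
        constructor
        · intro h
          rcases h with h | h
          · exact absurd (hMX v w h).1 hv
          · rcases (hmapAdj v w).1 h with ⟨a, b, hab, ha, hb⟩
            refine ⟨b, ?_, hb⟩
            have : a = ⟨v, hv'⟩ := Subtype.ext ha
            rwa [this] at hab
        · rintro ⟨b, hb, rfl⟩
          exact Or.inr ((hmapAdj v b).2 ⟨⟨v, hv'⟩, b, hb, rfl, rfl⟩)
      rw [this, Set.ncard_image_of_injective _ Subtype.val_injective]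
      exact hH₀deg _
  · intro S hS
    by_cases hSX : (S ∩ X).Nonempty
    · obtain ⟨v, hv, hsource⟩ := exists_source' D hDacyclic (S ∩ X) hSX
      refine ⟨v, hv.1, ?_⟩
      have hsub : S ∩ (G \ H).neighborSet v ⊆ {w | D v w} := by
        rintro w ⟨hwS, hadj⟩
        rw [SimpleGraph.mem_neighborSet, SimpleGraph.sdiff_adj] at hadj
        have hnM : ¬ M.Adj v w := fun h => hadj.2 ((hHXadj v w hv.2).2 h)
        rcases hDtotal v w hadj.1 hnM (Or.inl hv.2) with h | h
        · exact h
        · exfalso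
          have hwX : w ∈ X := by
            by_contra hwX
            exact hDasymm v w (hDout v w hv.2 hwX hadj.1 hnM) h
          exact hsource w ⟨hwS, hwX⟩ h
      calc (S ∩ (G \ H).neighborSet v).ncard ≤ {w | D v w}.ncard :=
            Set.ncard_le_ncard hsub (Set.toFinite _)
        _ ≤ 2 := hDdeg v hv.2
    · have hSXc : S ⊆ (Xᶜ : Set V) := by
        intro w hw
        by_contra hwX
        exact hSX ⟨w, hw, not_not.mp hwX⟩
      obtain ⟨v0, hv0⟩ := hS
      set S' : Set ↥(Xᶜ : Set V) := {a | (a : V) ∈ S} with hS'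
      obtain ⟨a, haS', hdeg⟩ := hH₀dgn S' ⟨⟨v0, hSXc hv0⟩, hv0⟩
      refine ⟨↑a, haS', ?_⟩
      have hsub : S ∩ (G \ H).neighborSet ↑a ⊆
          (↑) '' (S' ∩ (G.induce (Xᶜ : Set V) \ H₀).neighborSet a) := by
        rintro w ⟨hwS, hadj⟩
        rw [SimpleGraph.mem_neighborSet, SimpleGraph.sdiff_adj] at hadj
        have hw' : w ∈ (Xᶜ : Set V) := hSXc hwS
        refine ⟨⟨w, hw'⟩, ⟨hwS, ?_⟩, rfl⟩
        rw [SimpleGraph.mem_neighborSet, SimpleGraph.sdiff_adj]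
        refine ⟨hadj.1, ?_⟩
        intro h
        exact hadj.2 (Or.inr ((hmapAdj ↑a w).2 ⟨a, ⟨w, hw'⟩, h, rfl, rfl⟩))
      calc (S ∩ (G \ H).neighborSet ↑a).ncard
          ≤ ((↑) '' (S' ∩ (G.induce (Xᶜ : Set V) \ H₀).neighborSet a) : Set V).ncard :=
            Set.ncard_le_ncard hsub (Set.toFinite _)
        _ = (S' ∩ (G.induce (Xᶜ : Set V) \ H₀).neighborSet a).ncard :=
            Set.ncard_image_of_injective _ Subtype.val_injective
        _ ≤ 2 := hdeg
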